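/- Let n be even, let Γ_0,…,Γ_n ∈ M_s(ℂ) satisfy the Clifford relations Γ_AΓ_B + Γ_BΓ_A = 2δ_{AB}·1, let A be a commutative unital ℂ-algebra, let Y^0,…,Y^n ∈ A, and set Y := Σ_A Y^A ⊗ Γ_A ∈ A ⊗ M_s(ℂ). Then for every even m with m < n, the image of the (m+1)-fold tensor Y ⊗ Y ⊗ ⋯ ⊗ Y under the partial trace map tr : (A ⊗ M_s(ℂ))^{⊗(m+1)} → A^{⊗(m+1)} is zero. -/

import Mathlib

open scoped TensorProduct

lemma anticomm_list_prod {M : Type*} [Ring M] (X : M) :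
    ∀ (l : List M), (∀ x ∈ l, X * x = -(x * X)) →
      X * l.prod = (-1 : ℤ) ^ l.length • (l.prod * X) := by
  intro l
  induction l with
  | nil => simp
  | cons a t ih =>
    intro h
    have ha := h a List.mem_cons_self
    have ht := ih (fun x hx => h x (List.mem_cons_of_mem a hx))
    calc X * (a :: t).prod = (X * a) * t.prod := by rw [List.prod_cons, mul_assoc]
      _ = -(a * (X * t.prod)) := by rw [ha]; simp [mul_assoc]
      _ = -(a * ((-1 : ℤ) ^ t.length • (t.prod * X))) := by rw [ht]
      _ = (-1 : ℤ) ^ (a :: t).length • ((a :: t).prod * X) := by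
          rw [List.length_cons, List.prod_cons, pow_succ, mul_smul, mul_smul_comm]
          simp [mul_assoc]

theorem stmt3 {n s : ℕ} (hn : Even n)
    (Γ : Fin (n + 1) → Matrix (Fin s) (Fin s) ℂ)
    (hcliff : ∀ A B, Γ A * Γ B + Γ B * Γ A = (2 : ℂ) • (if A = B then 1 else 0))
    (A : Type*) [CommRing A] [Algebra ℂ A]
    (Y : Fin (n + 1) → A)
    (m : ℕ) (hm : Even m) (hmn : m < n)
    (tr : PiTensorProduct ℂ (fun _ : Fin (m + 1) => A ⊗[ℂ] Matrix (Fin s) (Fin s) ℂ)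
      →ₗ[ℂ] PiTensorProduct ℂ (fun _ : Fin (m + 1) => A))
    (htr : ∀ (a : Fin (m + 1) → A) (μ : Fin (m + 1) → Matrix (Fin s) (Fin s) ℂ),
      tr (PiTensorProduct.tprod ℂ fun i => a i ⊗ₜ[ℂ] μ i)
        = (List.ofFn μ).prod.trace • PiTensorProduct.tprod ℂ a) :
    tr (PiTensorProduct.tprod ℂ fun _ : Fin (m + 1) => ∑ B, Y B ⊗ₜ[ℂ] Γ B) = 0 := by
  -- square of each gamma is 1
  have hsq : ∀ C, Γ C * Γ C = 1 := by
    intro C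
    have := hcliff C C
    simp only [if_pos rfl, if_true] at this
    have h2 : (2 : ℂ) • (Γ C * Γ C) = (2 : ℂ) • (1 : Matrix (Fin s) (Fin s) ℂ) := by
      rw [two_smul ℂ (Γ C * Γ C)]; exact this
    exact smul_right_injective _ (two_ne_zero) h2
  -- anticommutation for distinct indices
  have hanti : ∀ {C D}, C ≠ D → Γ C * Γ D = -(Γ D * Γ C) := by
    intro C D hCD
    have := hcliff C D
    rw [if_neg hCD, smul_zero] at this
    exact eq_neg_of_add_eq_zero_left (by rw [this])
  -- expand the multilinear tprod
  have hexp : (PiTensorProduct.tprod ℂ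
      (fun _ : Fin (m + 1) => ∑ B, Y B ⊗ₜ[ℂ] Γ B)) =
      ∑ r : Fin (m + 1) → Fin (n + 1),
        PiTensorProduct.tprod ℂ (fun i => Y (r i) ⊗ₜ[ℂ] Γ (r i)) := by
    exact (PiTensorProduct.tprod ℂ).map_sum (fun _ B => Y B ⊗ₜ[ℂ] Γ B)
  rw [hexp, map_sum]
  apply Finset.sum_eq_zero
  intro r _
  rw [htr]
  -- it suffices to show the trace vanishes
  convert zero_smul ℂ _
  -- find an unused index
  have hns : ¬ Function.Surjective r := by
    intro hs
    have := Fintype.card_le_of_surjective r hs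
    simp only [Fintype.card_fin] at this
    omega
  rw [Function.Surjective] at hns
  push_neg at hns
  obtain ⟨C, hC⟩ := hns
  set P : Matrix (Fin s) (Fin s) ℂ := (List.ofFn (fun i => Γ (r i))).prod with hP
  have hcomm : Γ C * P = -(P * Γ C) := by
    have := anticomm_list_prod (Γ C) (List.ofFn (fun i => Γ (r i))) (by
      intro x hx
      rw [List.mem_ofFn] at hx
      obtain ⟨i, rfl⟩ := hx
      exact hanti (fun h => hC i h.symm))
    rw [List.length_ofFn] at this
    have hodd : Odd (m + 1) := Even.add_one hm
    rw [hodd.neg_one_pow] at this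
    rw [← hP] at this
    rw [this]
    simp
  have hc : P.trace = -P.trace := by
    calc P.trace = (Γ C * (Γ C * P)).trace := by rw [← mul_assoc, hsq, one_mul]
      _ = ((Γ C * P) * Γ C).trace := by rw [Matrix.trace_mul_comm]
      _ = (-(P * Γ C) * Γ C).trace := by rw [hcomm]
      _ = -((P * (Γ C * Γ C)).trace) := by rw [neg_mul, Matrix.trace_neg, mul_assoc]
      _ = -P.trace := by rw [hsq, mul_one]
  have : P.trace + P.trace = 0 := by rw [hc] at *; ring_nf; linear_combination hc
  exact add_self_eq_zero.mp this
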